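/- Let σ = k01+k02+k12+k21, π = k01·k02 + k01·k12 + k02·k21, and s = k02+k12 be given positive real numbers with σ > s, and suppose there exists at least one positive solution (k01,k02,k12,k21) of this system. Then the solution set of positive tuples (k01,k02,k12,k21) satisfying these three equations, when it contains more than one point, is infinite. -/

import Mathlib

theorem stmt_16 (σ π s : ℝ) (hσ : 0 < σ) (hπ : 0 < π) (hs : 0 < s) (hσs : s < σ)
    (S : Set (ℝ × ℝ × ℝ × ℝ))
    (hS : S = {p : ℝ × ℝ × ℝ × ℝ |
      0 < p.1 ∧ 0 < p.2.1 ∧ 0 < p.2.2.1 ∧ 0 < p.2.2.2 ∧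
      p.1 + p.2.1 + p.2.2.1 + p.2.2.2 = σ ∧
      p.1 * p.2.1 + p.1 * p.2.2.1 + p.2.1 * p.2.2.2 = π ∧
      p.2.1 + p.2.2.1 = s})
    (hne : S.Nonempty)
    (htwo : ∃ p ∈ S, ∃ q ∈ S, p ≠ q) :
    S.Infinite := by
  obtain ⟨p, hp, q, hq, hpq⟩ := htwo
  subst hS
  obtain ⟨hp1, hp2, hp3, hp4, hp5, hp6, hp7⟩ := hp
  obtain ⟨hq1, hq2, hq3, hq4, hq5, hq6, hq7⟩ := hq
  set K : ℝ := π - (σ - s) * s with hK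
  have hKp : K = -(p.2.2.2 * p.2.2.1) := by
    rw [hK]; linear_combination -hp6 + s*hp5 + (p.1 + p.2.2.2 - s) * hp7
  have hKq : K = -(q.2.2.2 * q.2.2.1) := by
    rw [hK]; linear_combination -hq6 + s*hq5 + (q.1 + q.2.2.2 - s) * hq7
  have hKneg : K < 0 := by nlinarith
  -- distinct d-coordinates
  have hd : p.2.2.2 ≠ q.2.2.2 := by
    intro hdd
    apply hpq
    have ha : p.1 = q.1 := by linarith
    have hb : p.2.1 = q.2.1 := by
      have h1 : p.2.1 * p.2.2.2 = q.2.1 * q.2.2.2 := by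
        linear_combination hp6 - hq6 - p.1*hp7 + q.1*hq7 - s*ha
      rw [← hdd] at h1
      have := mul_right_cancel₀ (ne_of_gt hp4) h1
      exact this
    have hc : p.2.2.1 = q.2.2.1 := by linarith
    exact Prod.ext ha (Prod.ext hb (Prod.ext hc hdd))
  set f : ℝ → ℝ × ℝ × ℝ × ℝ := fun d => (σ - s - d, s + K/d, -K/d, d) with hf
  set dmin := min p.2.2.2 q.2.2.2 with hdm
  set dmax := max p.2.2.2 q.2.2.2 with hdM
  have hlt : dmin < dmax := min_lt_max.mpr hd
  have hdmpos : 0 < dmin := lt_min hp4 hq4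
  have hbmin : 0 < s + K / dmin := by
    rcases min_choice p.2.2.2 q.2.2.2 with h | h
    · rw [hdm, h]
      have : K / p.2.2.2 = -p.2.2.1 := by
        rw [hKp]; field_simp
      rw [this]; linarith
    · rw [hdm, h]
      have : K / q.2.2.2 = -q.2.2.1 := by
        rw [hKq]; field_simp
      rw [this]; linarith
  have hdMlt : dmax < σ - s := by
    have h1 : p.2.2.2 < σ - s := by linarith
    have h2 : q.2.2.2 < σ - s := by linarith
    exact max_lt h1 h2
  have hsub : f '' Set.Ioo dmin dmax ⊆
      {p : ℝ × ℝ × ℝ × ℝ |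
      0 < p.1 ∧ 0 < p.2.1 ∧ 0 < p.2.2.1 ∧ 0 < p.2.2.2 ∧
      p.1 + p.2.1 + p.2.2.1 + p.2.2.2 = σ ∧
      p.1 * p.2.1 + p.1 * p.2.2.1 + p.2.1 * p.2.2.2 = π ∧
      p.2.1 + p.2.2.1 = s} := by
    rintro _ ⟨d, ⟨hd1, hd2⟩, rfl⟩
    simp only [hf, Set.mem_setOf_eq]
    have hdpos : 0 < d := lt_trans hdmpos hd1
    have hd0 : d ≠ 0 := ne_of_gt hdpos
    have hbmono : K / dmin < K / d := by
      rw [div_lt_div_iff₀ hdmpos hdpos]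
      nlinarith
    refine ⟨by linarith, ?_, ?_, ?_, ?_, ?_, ?_⟩
    · show 0 < s + K / d; linarith
    · show 0 < -K / d
      apply div_pos (by linarith) hdpos
    · exact hdpos
    · ring
    · rw [hK]; field_simp; ring
    · ring
  have hinj : Set.InjOn f (Set.Ioo dmin dmax) := by
    intro x _ y _ hxy
    exact congrArg (fun r => r.2.2.2) hxy
  exact ((Set.Ioo_infinite hlt).image hinj).mono hsub
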